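/- arXiv:2004.08251 — 4 statements merged into one kernel-verified Lean document; each statement's English description precedes it below -/
import Mathlib

section
/- Let k be a commutative ring, G a group, H a subgroup, and suppose k[G/H] is a flat k[G]-module. Then every element h of H has finite order. -/
open scoped BigOperators

/-- A module `M` over a (possibly noncommutative) ring `R` is flat, expressed via the
equational criterion for flatness (which is equivalent to exactness of the tensor
product with `M`, and makes sense over noncommutative rings). -/
def IsFlatModule (R M : Type*) [Ring R] [AddCommGroup M] [Module R M] : Prop :=
  ∀ (n : ℕ) (r : Fin n → R) (x : Fin n → M), (∑ i, r i • x i) = 0 →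
    ∃ (m : ℕ) (a : Fin n → Fin m → R) (y : Fin m → M),
      (∀ i, x i = ∑ j, a i j • y j) ∧ ∀ j, (∑ i, r i * a i j) = 0

lemma key_lemma {k G : Type*} [CommRing k] [Group G] {h : G} (hh : ¬ IsOfFinOrder h)
    (b : MonoidAlgebra k G) (hb : (MonoidAlgebra.single h 1 - 1) * b = 0) : b = 0 := by
  have hmul : ∀ g : G, b.coeff (h * g) = b.coeff g := by
    intro g
    have hb' : (MonoidAlgebra.single h (1:k)) * b = b := by
      rw [sub_mul, one_mul, sub_eq_zero] at hb; exact hb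
    have := congrArg (fun f : MonoidAlgebra k G => f.coeff (h * g)) hb'
    simpa [MonoidAlgebra.single_mul_apply] using this.symm
  have hpow : ∀ (n : ℕ) (g : G), b.coeff (h ^ n * g) = b.coeff g := by
    intro n
    induction n with
    | zero => simp
    | succ n ih => intro g; rw [pow_succ, mul_assoc, ih, hmul]
  by_contra hb0
  obtain ⟨g, hg⟩ := Finsupp.ne_iff.mp (fun h0 => hb0 (MonoidAlgebra.coeff_eq_zero.mp h0))
  simp only [Finsupp.coe_zero, Pi.zero_apply] at hg
  have hinj : Function.Injective (fun n : ℕ => h ^ n) :=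
    injective_pow_iff_not_isOfFinOrder.mpr hh
  have : (↑b.coeff.support : Set G).Infinite := by
    refine Set.infinite_of_injective_forall_mem (f := fun n : ℕ => h ^ n * g)
      (fun n m hnm => hinj (mul_right_cancel hnm)) (fun n => ?_)
    simp only [Finset.coe_sort_coe, Finset.mem_coe, Finsupp.mem_support_iff]
    rw [hpow]; exact hg
  exact this b.coeff.support.finite_toSet

/-- Let `k` be a nonzero commutative ring, `G` a group, `H ≤ G` a
subgroup, and suppose the permutation module `k[G/H]` is a flat `k[G]`-module.
Then every element `h` of `H` has finite order. -/
theorem finite_order_of_permutation_module_flat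
    (k G : Type*) [CommRing k] [Nontrivial k] [Group G] (H : Subgroup G)
    (hflat : IsFlatModule (MonoidAlgebra k G)
      (Representation.ofMulAction k G (G ⧸ H)).asModule) :
    ∀ h ∈ H, IsOfFinOrder h := by
  intro h hH
  by_contra hfin
  set ρ := Representation.ofMulAction k G (G ⧸ H) with hρ
  set e := ρ.asModuleEquiv with he
  set x : ρ.asModule := e.symm (MonoidAlgebra.single (↑(1:G) : G ⧸ H) (1:k)) with hx
  have hsmul : (MonoidAlgebra.single h (1:k) - 1) • x = 0 := by
    apply e.injective
    rw [map_zero, Representation.asModuleEquiv_map_smul]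
    rw [map_sub, map_one]
    simp only [Representation.asAlgebraHom_single, one_smul]
    have hex : e x = MonoidAlgebra.single (↑(1:G) : G ⧸ H) (1:k) := by
      rw [hx]; exact e.apply_symm_apply _
    rw [LinearMap.sub_apply, hex, Module.End.one_apply]
    rw [hρ, Representation.ofMulAction_single]
    have : h • (↑(1:G) : G ⧸ H) = ↑(1:G) := by
      show (↑(h * 1) : G ⧸ H) = ↑(1:G)
      rw [mul_one]
      exact QuotientGroup.eq.mpr (by simpa using H.inv_mem hH)
    rw [this, sub_self]
  obtain ⟨m, a, y, hxy, hrel⟩ := hflat 1 ![MonoidAlgebra.single h 1 - 1] ![x]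
    (by simpa using hsmul)
  have ha : ∀ j, a 0 j = 0 := by
    intro j
    have := hrel j
    simp only [Fin.sum_univ_one, Matrix.cons_val_zero] at this
    exact key_lemma hfin _ this
  have hx0 : x = 0 := by
    have := hxy 0
    simp only [Matrix.cons_val_zero] at this
    rw [this]
    apply Finset.sum_eq_zero
    intro j _
    rw [ha j, zero_smul]
  have : MonoidAlgebra.single (↑(1:G) : G ⧸ H) (1:k) = 0 := by
    have := congrArg e hx0
    rw [map_zero] at this
    rw [← this, hx, e.apply_symm_apply]
  exact one_ne_zero (MonoidAlgebra.single_eq_zero.mp this)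
end

section
/- Let S be a (possibly non-unital) ring with an approximate unit given by a directed net of idempotents (e_i) satisfying e_i s = s = s e_i eventually for all s, and e_j e_i = e_i e_j = e_i for i ≤ j. If M is a non-degenerate left S-module (i.e., SM = M), then the natural multiplication map S ⊗_S M → M is an isomorphism of S-modules. -/
open TensorProduct

/-- The tensor product `S ⊗_S M` over a possibly non-unital ring `S`: the quotient of the
`ℤ`-tensor product `S ⊗[ℤ] M` by the relations `(s * r) ⊗ m = s ⊗ (r • m)`. Here the
relations submodule. -/
def nonUnitalTensorRel (S M : Type*) [NonUnitalRing S] [AddCommGroup M] [SMul S M] :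
    Submodule ℤ (S ⊗[ℤ] M) :=
  Submodule.span ℤ {x | ∃ (s r : S) (m : M), x = (s * r) ⊗ₜ[ℤ] m - s ⊗ₜ[ℤ] (r • m)}

/-- Let `S` be a (possibly non-unital) ring with an approximate unit,
i.e. a net of idempotents `e : I → S` over a directed partially ordered index set such
that every `s ∈ S` satisfies `e i * s = s = s * e i` for some `i`, and
`e j * e i = e i * e j = e i` for `i ≤ j`.  If `M` is a non-degenerate left `S`-module,
then the natural multiplication map `S ⊗_S M → M` is an isomorphism of `S`-modules:
there is an additive bijection `f` from the quotient `(S ⊗[ℤ] M) ⧸ (relations)` to `M`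
with `f ⟦s ⊗ m⟧ = s • m` (this formula also makes `f` automatically `S`-equivariant). -/
theorem approxUnit_tensor_iso
    (S M : Type*) [NonUnitalRing S] [AddCommGroup M] [SMul S M]
    -- `M` is a left `S`-module over the non-unital ring `S`:
    (hdistl : ∀ (s : S) (m m' : M), s • (m + m') = s • m + s • m')
    (hdistr : ∀ (s s' : S) (m : M), (s + s') • m = s • m + s' • m)
    (hassoc : ∀ (s t : S) (m : M), (s * t) • m = s • (t • m))
    -- approximate unit:
    (I : Type*) [Preorder I] [IsDirected I (· ≤ ·)]
    (e : I → S)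
    (hidem : ∀ i, e i * e i = e i)
    (happrox : ∀ s : S, ∃ i, e i * s = s ∧ s * e i = s)
    (hcompat : ∀ i j, i ≤ j → e j * e i = e i ∧ e i * e j = e i)
    -- `M` is non-degenerate:
    (hnondeg : ∀ m : M, ∃ i, e i • m = m) :
    ∃ f : (S ⊗[ℤ] M) ⧸ nonUnitalTensorRel S M →+ M,
      (∀ (s : S) (m : M),
        f (Submodule.Quotient.mk (s ⊗ₜ[ℤ] m)) = s • m) ∧ Function.Bijective f := by
  -- basic consequences of the module axioms
  have hs0 : ∀ s : S, s • (0 : M) = 0 := by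
    intro s
    have h := hdistl s 0 0
    rw [add_zero] at h
    exact (left_eq_add.mp h)
  have h0m : ∀ m : M, (0 : S) • m = 0 := by
    intro m
    have h := hdistr 0 0 m
    rw [add_zero] at h
    exact (left_eq_add.mp h)
  -- the bilinear multiplication map as an additive hom
  let g : S →+ M →+ M :=
    { toFun := fun s => { toFun := fun m => s • m, map_zero' := hs0 s, map_add' := hdistl s }
      map_zero' := by ext m; exact h0m m
      map_add' := fun s s' => by ext m; exact hdistr s s' m }
  let g2 : S →+ (M →ₗ[ℤ] M) :=
    { toFun := fun s => (g s).toIntLinearMap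
      map_zero' := by ext m; exact h0m m
      map_add' := fun s s' => by ext m; exact hdistr s s' m }
  let φ : S ⊗[ℤ] M →ₗ[ℤ] M := TensorProduct.lift g2.toIntLinearMap
  have hφ : ∀ (s : S) (m : M), φ (s ⊗ₜ[ℤ] m) = s • m := fun s m => rfl
  have hker : nonUnitalTensorRel S M ≤ LinearMap.ker φ := by
    rw [nonUnitalTensorRel, Submodule.span_le]
    rintro x ⟨s, r, m, rfl⟩
    simp only [SetLike.mem_coe, LinearMap.mem_ker, map_sub, hφ, hassoc, sub_self]
  let f0 : ((S ⊗[ℤ] M) ⧸ nonUnitalTensorRel S M) →ₗ[ℤ] M :=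
    Submodule.liftQ _ φ hker
  have hf0 : ∀ x : S ⊗[ℤ] M, f0 (Submodule.Quotient.mk x) = φ x := fun x => rfl
  have mk_rel : ∀ (s r : S) (m : M),
      (Submodule.Quotient.mk ((s * r) ⊗ₜ[ℤ] m) :
        (S ⊗[ℤ] M) ⧸ nonUnitalTensorRel S M) = Submodule.Quotient.mk (s ⊗ₜ[ℤ] (r • m)) := by
    intro s r m
    rw [Submodule.Quotient.eq]
    exact Submodule.subset_span ⟨s, r, m, rfl⟩
  -- key structural lemma
  have key : ∀ x : S ⊗[ℤ] M, ∃ i,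
      (Submodule.Quotient.mk x : (S ⊗[ℤ] M) ⧸ nonUnitalTensorRel S M)
        = Submodule.Quotient.mk (e i ⊗ₜ[ℤ] (φ x)) ∧ e i • φ x = φ x := by
    intro x
    induction x using TensorProduct.induction_on with
    | zero =>
      obtain ⟨i, -, -⟩ := happrox 0
      exact ⟨i, by simp, by simpa using hs0 (e i)⟩
    | tmul s m =>
      obtain ⟨i, his, -⟩ := happrox s
      refine ⟨i, ?_, ?_⟩
      · rw [hφ]
        calc (Submodule.Quotient.mk (s ⊗ₜ[ℤ] m) :
              (S ⊗[ℤ] M) ⧸ nonUnitalTensorRel S M)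
            = Submodule.Quotient.mk ((e i * s) ⊗ₜ[ℤ] m) := by rw [his]
          _ = Submodule.Quotient.mk (e i ⊗ₜ[ℤ] (s • m)) := mk_rel _ _ _
      · rw [hφ, ← hassoc, his]
    | add x y hx hy =>
      obtain ⟨i, hxi, hxa⟩ := hx
      obtain ⟨j, hyj, hya⟩ := hy
      obtain ⟨k, hik, hjk⟩ := directed_of (· ≤ ·) i j
      have hki := (hcompat i k hik).1
      have hkj := (hcompat j k hjk).1
      have hxk : e k • φ x = φ x := by
        rw [← hxa, ← hassoc, hki, hxa]
      have hyk : e k • φ y = φ y := by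
        rw [← hya, ← hassoc, hkj, hya]
      have hxmk : (Submodule.Quotient.mk x : (S ⊗[ℤ] M) ⧸ nonUnitalTensorRel S M)
          = Submodule.Quotient.mk (e k ⊗ₜ[ℤ] (φ x)) := by
        rw [hxi]
        calc (Submodule.Quotient.mk (e i ⊗ₜ[ℤ] φ x) :
              (S ⊗[ℤ] M) ⧸ nonUnitalTensorRel S M)
            = Submodule.Quotient.mk ((e k * e i) ⊗ₜ[ℤ] φ x) := by rw [hki]
          _ = Submodule.Quotient.mk (e k ⊗ₜ[ℤ] (e i • φ x)) := mk_rel _ _ _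
          _ = Submodule.Quotient.mk (e k ⊗ₜ[ℤ] φ x) := by rw [hxa]
      have hymk : (Submodule.Quotient.mk y : (S ⊗[ℤ] M) ⧸ nonUnitalTensorRel S M)
          = Submodule.Quotient.mk (e k ⊗ₜ[ℤ] (φ y)) := by
        rw [hyj]
        calc (Submodule.Quotient.mk (e j ⊗ₜ[ℤ] φ y) :
              (S ⊗[ℤ] M) ⧸ nonUnitalTensorRel S M)
            = Submodule.Quotient.mk ((e k * e j) ⊗ₜ[ℤ] φ y) := by rw [hkj]
          _ = Submodule.Quotient.mk (e k ⊗ₜ[ℤ] (e j • φ y)) := mk_rel _ _ _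
          _ = Submodule.Quotient.mk (e k ⊗ₜ[ℤ] φ y) := by rw [hya]
      refine ⟨k, ?_, ?_⟩
      · rw [map_add, Submodule.Quotient.mk_add, hxmk, hymk, ← Submodule.Quotient.mk_add,
          ← TensorProduct.tmul_add]
      · rw [map_add, hdistl, hxk, hyk]
  refine ⟨f0.toAddMonoidHom, fun s m => rfl, ?_, ?_⟩
  · -- injective
    intro a b hab
    obtain ⟨x, rfl⟩ := Submodule.Quotient.mk_surjective _ a
    obtain ⟨y, rfl⟩ := Submodule.Quotient.mk_surjective _ b
    have hxy : φ x = φ y := hab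
    obtain ⟨i, hxi, -⟩ := key x
    obtain ⟨j, hyj, -⟩ := key y
    obtain ⟨k, hik, hjk⟩ := directed_of (· ≤ ·) i j
    -- push both to level k, as in key's add case; easier: consider x - y
    obtain ⟨l, hl, -⟩ := key (x - y)
    have : φ (x - y) = 0 := by rw [map_sub, hxy, sub_self]
    rw [this, TensorProduct.tmul_zero] at hl
    have := hl
    rw [Submodule.Quotient.mk_sub] at this
    have h0 : (Submodule.Quotient.mk x : (S ⊗[ℤ] M) ⧸ nonUnitalTensorRel S M)
        - Submodule.Quotient.mk y = 0 := by
      rw [this, Submodule.Quotient.mk_zero]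
    exact sub_eq_zero.mp h0
  · -- surjective
    intro m
    obtain ⟨i, hi⟩ := hnondeg m
    exact ⟨Submodule.Quotient.mk (e i ⊗ₜ[ℤ] m), hi⟩
end

section
/- Let S be a ring with approximate unit and A an S-algebra with approximate unit. Then there is a short exact sequence of (A,A)-bimodules 0 → Ω¹_S A → A ⊗_S A → A → 0, where the right-hand map is multiplication a₀ ⊗ a₁ ↦ a₀a₁, and Ω¹_S A = A ⊗_S (A/S) carries the Leibniz bimodule structure a·(b ⊗ [c])·d = ab ⊗ [cd] − abc ⊗ [d]. -/
open TensorProduct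

section CuntzQuillen

variable (S A : Type*) [NonUnitalRing S] [NonUnitalRing A] (φ : S →ₙ+* A)

/-- The image of `S` in `A`, as a `ℤ`-submodule (it is an additive subgroup, so its
`ℤ`-span is itself). -/
def imageOfS : Submodule ℤ A := Submodule.span ℤ (Set.range φ)

/-- The relations defining the tensor product `A ⊗_S A` over the non-unital ring `S`
as a quotient of `A ⊗[ℤ] A`. -/
def tensorSRel : Submodule ℤ (A ⊗[ℤ] A) :=
  Submodule.span ℤ
    {x | ∃ (s : S) (a b : A), x = (a * φ s) ⊗ₜ[ℤ] b - a ⊗ₜ[ℤ] (φ s * b)}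

/-- `A ⊗_S A`, the tensor product over the non-unital ring `S`. -/
def tensorSAA := (A ⊗[ℤ] A) ⧸ tensorSRel S A φ

noncomputable instance : AddCommGroup (tensorSAA S A φ) :=
  inferInstanceAs (AddCommGroup ((A ⊗[ℤ] A) ⧸ tensorSRel S A φ))

/-- The relations defining `Ω¹_S A = A ⊗_S (A/S)` as a quotient of `A ⊗[ℤ] (A/S)`. -/
def omegaRel : Submodule ℤ (A ⊗[ℤ] (A ⧸ imageOfS S A φ)) :=
  Submodule.span ℤ
    {x | ∃ (s : S) (a b : A),
      x = (a * φ s) ⊗ₜ[ℤ] (Submodule.Quotient.mk b)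
        - a ⊗ₜ[ℤ] (Submodule.Quotient.mk (φ s * b) : A ⧸ imageOfS S A φ)}

/-- `Ω¹_S A = A ⊗_S (A/S)`, the bimodule of differential forms of degree one. -/
def omegaSA := (A ⊗[ℤ] (A ⧸ imageOfS S A φ)) ⧸ omegaRel S A φ

noncomputable instance : AddCommGroup (omegaSA S A φ) :=
  inferInstanceAs (AddCommGroup ((A ⊗[ℤ] (A ⧸ imageOfS S A φ)) ⧸ omegaRel S A φ))

/-- class of `a ⊗ b` in `A ⊗_S A` -/
noncomputable def mkT (a b : A) : tensorSAA S A φ :=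
  Submodule.Quotient.mk (a ⊗ₜ[ℤ] b)

/-- class of `a ⊗ [b]` in `Ω¹_S A` -/
noncomputable def mkO (a b : A) : omegaSA S A φ :=
  Submodule.Quotient.mk (a ⊗ₜ[ℤ] (Submodule.Quotient.mk b : A ⧸ imageOfS S A φ))

namespace CQaux

variable {S A}

/-- build a double additive hom from a biadditive function -/
def mk₂ {M : Type*} [AddCommGroup M] (f : A → A → M)
    (h1 : ∀ a a' b, f (a + a') b = f a b + f a' b)
    (h2 : ∀ a b b', f a (b + b') = f a b + f a b') : A →+ A →+ M :=
  AddMonoidHom.mk' (fun a => AddMonoidHom.mk' (f a) (h2 a))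
    (fun a a' => AddMonoidHom.ext fun b => h1 a a' b)

@[simp] theorem mk₂_apply {M : Type*} [AddCommGroup M] (f : A → A → M) (h1 h2) (a b : A) :
    mk₂ f h1 h2 a b = f a b := rfl

theorem zsmul_balanced {M : Type*} [AddCommGroup M] (f : A →+ A →+ M) :
    ∀ (r : ℤ) (a b : A), f (r • a) b = f a (r • b) := by
  intro r a b
  rw [map_zsmul f r a, AddMonoidHom.smul_apply, map_zsmul]

noncomputable def liftT {M : Type*} [AddCommGroup M] (f : A →+ A →+ M)
    (hf : ∀ (s : S) (a b : A), f (a * φ s) b = f a (φ s * b)) :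
    tensorSAA S A φ →+ M :=
  (Submodule.liftQ (tensorSRel S A φ)
    (TensorProduct.liftAddHom f (zsmul_balanced f)).toIntLinearMap
    (by
      rw [tensorSRel, Submodule.span_le]
      rintro x ⟨s, a, b, rfl⟩
      simp only [SetLike.mem_coe, LinearMap.mem_ker, map_sub,
        AddMonoidHom.coe_toIntLinearMap, TensorProduct.liftAddHom_tmul]
      rw [hf s a b, sub_self])).toAddMonoidHom

@[simp] theorem liftT_mkT {M : Type*} [AddCommGroup M] (f : A →+ A →+ M) (hf) (a b : A) :
    liftT φ f hf (mkT S A φ a b) = f a b := rfl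

theorem T_ext {M : Type*} [AddCommGroup M] (F G : tensorSAA S A φ →+ M)
    (h : ∀ a b : A, F (mkT S A φ a b) = G (mkT S A φ a b)) : F = G := by
  ext x
  obtain ⟨y, rfl⟩ := Submodule.Quotient.mk_surjective _ x
  induction y using TensorProduct.induction_on with
  | zero =>
      show F (Submodule.Quotient.mk 0) = G (Submodule.Quotient.mk 0)
      rw [Submodule.Quotient.mk_zero]
      exact (map_zero F).trans (map_zero G).symm
  | tmul a b => exact h a b
  | add x y hx hy =>
      show F (Submodule.Quotient.mk (x + y)) = G (Submodule.Quotient.mk (x + y))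
      rw [Submodule.Quotient.mk_add]
      exact (map_add F _ _).trans ((congrArg₂ (· + ·) hx hy).trans (map_add G _ _).symm)

noncomputable def liftO {M : Type*} [AddCommGroup M] (f : A →+ A →+ M)
    (hS : ∀ (a : A) (s : S), f a (φ s) = 0)
    (hf : ∀ (s : S) (a b : A), f (a * φ s) b = f a (φ s * b)) :
    omegaSA S A φ →+ M :=
  let inner : A → (A ⧸ imageOfS S A φ) →ₗ[ℤ] M := fun a =>
    Submodule.liftQ (imageOfS S A φ) (f a).toIntLinearMap
      (by
        rw [imageOfS, Submodule.span_le]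
        rintro x ⟨s, rfl⟩
        simpa using hS a s)
  let fbar : A →+ ((A ⧸ imageOfS S A φ) →+ M) :=
    AddMonoidHom.mk' (fun a => (inner a).toAddMonoidHom)
      (by
        intro a a'
        ext x
        obtain ⟨b, rfl⟩ := Submodule.Quotient.mk_surjective _ x
        show inner (a + a') (Submodule.Quotient.mk b)
          = inner a (Submodule.Quotient.mk b) + inner a' (Submodule.Quotient.mk b)
        simp only [inner, Submodule.liftQ_apply, AddMonoidHom.coe_toIntLinearMap, map_add,
          AddMonoidHom.add_apply])
  have hbal : ∀ (r : ℤ) (a : A) (x : A ⧸ imageOfS S A φ),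
      fbar (r • a) x = fbar a (r • x) := by
    intro r a x
    rw [map_zsmul fbar r a, AddMonoidHom.smul_apply, map_zsmul]
  (Submodule.liftQ (omegaRel S A φ)
    (TensorProduct.liftAddHom fbar hbal).toIntLinearMap
    (by
      rw [omegaRel, Submodule.span_le]
      rintro x ⟨s, a, b, rfl⟩
      simp only [SetLike.mem_coe, LinearMap.mem_ker, map_sub,
        AddMonoidHom.coe_toIntLinearMap, TensorProduct.liftAddHom_tmul]
      show inner (a * φ s) (Submodule.Quotient.mk b)
        - inner a (Submodule.Quotient.mk (φ s * b)) = 0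
      simp only [inner, Submodule.liftQ_apply, AddMonoidHom.coe_toIntLinearMap]
      rw [hf s a b, sub_self])).toAddMonoidHom

@[simp] theorem liftO_mkO {M : Type*} [AddCommGroup M] (f : A →+ A →+ M) (hS hf) (a b : A) :
    liftO φ f hS hf (mkO S A φ a b) = f a b := rfl

theorem O_ext {M : Type*} [AddCommGroup M] (F G : omegaSA S A φ →+ M)
    (h : ∀ a b : A, F (mkO S A φ a b) = G (mkO S A φ a b)) : F = G := by
  ext x
  obtain ⟨y, rfl⟩ := Submodule.Quotient.mk_surjective _ x
  induction y using TensorProduct.induction_on with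
  | zero =>
      show F (Submodule.Quotient.mk 0) = G (Submodule.Quotient.mk 0)
      rw [Submodule.Quotient.mk_zero]
      exact (map_zero F).trans (map_zero G).symm
  | tmul a c =>
      obtain ⟨b, rfl⟩ := Submodule.Quotient.mk_surjective _ c
      exact h a b
  | add x y hx hy =>
      show F (Submodule.Quotient.mk (x + y)) = G (Submodule.Quotient.mk (x + y))
      rw [Submodule.Quotient.mk_add]
      exact (map_add F _ _).trans ((congrArg₂ (· + ·) hx hy).trans (map_add G _ _).symm)

theorem hrelT (s : S) (a b : A) : mkT S A φ (a * φ s) b = mkT S A φ a (φ s * b) :=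
  (Submodule.Quotient.eq _).mpr (Submodule.subset_span ⟨s, a, b, rfl⟩)

theorem hrelO (s : S) (a b : A) : mkO S A φ (a * φ s) b = mkO S A φ a (φ s * b) :=
  (Submodule.Quotient.eq _).mpr (Submodule.subset_span ⟨s, a, b, rfl⟩)

theorem mkT_add_left (a a' b : A) :
    mkT S A φ (a + a') b = mkT S A φ a b + mkT S A φ a' b := by
  rw [mkT, TensorProduct.add_tmul, Submodule.Quotient.mk_add]; rfl

theorem mkT_add_right (a b b' : A) :
    mkT S A φ a (b + b') = mkT S A φ a b + mkT S A φ a b' := by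
  rw [mkT, TensorProduct.tmul_add, Submodule.Quotient.mk_add]; rfl

theorem mkO_add_left (a a' b : A) :
    mkO S A φ (a + a') b = mkO S A φ a b + mkO S A φ a' b := by
  rw [mkO, TensorProduct.add_tmul, Submodule.Quotient.mk_add]; rfl

theorem mkO_add_right (a b b' : A) :
    mkO S A φ a (b + b') = mkO S A φ a b + mkO S A φ a b' := by
  rw [mkO, Submodule.Quotient.mk_add, TensorProduct.tmul_add, Submodule.Quotient.mk_add]; rfl

theorem mkO_phi (a : A) (s : S) : mkO S A φ a (φ s) = 0 := by
  have h : (Submodule.Quotient.mk (φ s) : A ⧸ imageOfS S A φ) = 0 :=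
    (Submodule.Quotient.mk_eq_zero _).mpr (Submodule.subset_span ⟨s, rfl⟩)
  rw [mkO, h, TensorProduct.tmul_zero, Submodule.Quotient.mk_zero]; rfl

end CQaux

open CQaux in
/-- **Cuntz–Quillen.** Let `S` be a ring with approximate unit and `A` an
`S`-algebra with approximate unit.  Then there is a short exact sequence of
`(A,A)`-bimodules `0 → Ω¹_S A → A ⊗_S A → A → 0`, where the right-hand map is the
multiplication `a₀ ⊗ a₁ ↦ a₀ a₁`, the left-hand map sends `a ⊗ [b]` to
`a ⊗ b − ab ⊗ φ(e i)` (for `e i` an approximate unit at `ab`), and `Ω¹_S A = A ⊗_S (A/S)`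
carries the Leibniz bimodule structure `c·(a ⊗ [b])·d = ca ⊗ [bd] − cab ⊗ [d]`.
The bimodule actions on the quotients are part of the existential data, specified on
generators. -/
theorem cuntzQuillen_ses
    (I : Type*) [Preorder I] [IsDirected I (· ≤ ·)] (e : I → S)
    (hidem : ∀ i, e i * e i = e i)
    (happroxS : ∀ s : S, ∃ i, e i * s = s ∧ s * e i = s)
    (hcompat : ∀ i j, i ≤ j → e j * e i = e i ∧ e i * e j = e i)
    (happroxA : ∀ a : A, ∃ i, φ (e i) * a = a ∧ a * φ (e i) = a) :
    ∃ (κ : omegaSA S A φ →+ tensorSAA S A φ)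
      (μ : tensorSAA S A φ →+ A)
      (lT rT : A → tensorSAA S A φ →+ tensorSAA S A φ)
      (lO rO : A → omegaSA S A φ →+ omegaSA S A φ),
      -- the multiplication map
      (∀ a b : A, μ (mkT S A φ a b) = a * b) ∧
      -- the map κ : Ω¹_S A → A ⊗_S A
      (∀ (a b : A) (i : I), (φ (e i) * (a * b) = a * b ∧ (a * b) * φ (e i) = a * b) →
        κ (mkO S A φ a b) = mkT S A φ a b - mkT S A φ (a * b) (φ (e i))) ∧
      -- bimodule structures on `A ⊗_S A` (outer) and `Ω¹_S A` (Leibniz)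
      (∀ c a b : A, lT c (mkT S A φ a b) = mkT S A φ (c * a) b) ∧
      (∀ d a b : A, rT d (mkT S A φ a b) = mkT S A φ a (b * d)) ∧
      (∀ c a b : A, lO c (mkO S A φ a b) = mkO S A φ (c * a) b) ∧
      (∀ d a b : A, rO d (mkO S A φ a b)
        = mkO S A φ a (b * d) - mkO S A φ (a * b) d) ∧
      -- they are right and left actions which commute
      (∀ c c' : A, ∀ x, lT c (lT c' x) = lT (c * c') x) ∧
      (∀ d d' : A, ∀ x, rT d' (rT d x) = rT (d * d') x) ∧
      (∀ c d : A, ∀ x, rT d (lT c x) = lT c (rT d x)) ∧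
      (∀ c c' : A, ∀ x, lO c (lO c' x) = lO (c * c') x) ∧
      (∀ d d' : A, ∀ x, rO d' (rO d x) = rO (d * d') x) ∧
      (∀ c d : A, ∀ x, rO d (lO c x) = lO c (rO d x)) ∧
      -- κ and μ are bimodule maps
      (∀ c x, κ (lO c x) = lT c (κ x)) ∧
      (∀ d x, κ (rO d x) = rT d (κ x)) ∧
      (∀ c x, μ (lT c x) = c * μ x) ∧
      (∀ d x, μ (rT d x) = μ x * d) ∧
      -- exactness: 0 → Ω¹_S A → A ⊗_S A → A → 0
      Function.Injective κ ∧
      Function.Surjective μ ∧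
      (∀ t : tensorSAA S A φ, μ t = 0 ↔ ∃ w, κ w = t) := by
  classical
  choose ι hι using happroxA
  have habs : ∀ (a : A) (i k : I), i ≤ k → a * φ (e i) = a → a * φ (e k) = a := by
    intro a i k hik h
    conv_lhs => rw [← h]
    rw [mul_assoc, ← map_mul, (hcompat i k hik).2, h]
  have hindep : ∀ (x : A) (i j : I), x * φ (e i) = x → x * φ (e j) = x →
      mkT S A φ x (φ (e i)) = mkT S A φ x (φ (e j)) := by
    intro x i j hi hj
    obtain ⟨k, hik, hjk⟩ := directed_of (· ≤ ·) i j
    have h1 := hrelT φ (e i) x (φ (e k))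
    rw [hi, ← map_mul, (hcompat i k hik).2] at h1
    have h2 := hrelT φ (e j) x (φ (e k))
    rw [hj, ← map_mul, (hcompat j k hjk).2] at h2
    rw [← h1, ← h2]
  set σf : A → tensorSAA S A φ := fun a => mkT S A φ a (φ (e (ι a))) with hσf
  have hσ : ∀ (a : A) (i : I), a * φ (e i) = a → σf a = mkT S A φ a (φ (e i)) :=
    fun a i h => hindep a (ι a) i (hι a).2 h
  have hσadd : ∀ a b : A, σf (a + b) = σf a + σf b := by
    intro a b
    obtain ⟨k, hk1, hk2⟩ := directed_of (· ≤ ·) (ι a) (ι b)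
    have ha : a * φ (e k) = a := habs a _ k hk1 (hι a).2
    have hb : b * φ (e k) = b := habs b _ k hk2 (hι b).2
    have hab : (a + b) * φ (e k) = a + b := by rw [add_mul, ha, hb]
    rw [hσ a k ha, hσ b k hb, hσ (a + b) k hab, ← mkT_add_left]
  -- the multiplication map
  let μ : tensorSAA S A φ →+ A :=
    liftT φ (mk₂ (fun a b => a * b) (fun a a' b => add_mul a a' b)
      (fun a b b' => mul_add a b b')) (fun s a b => mul_assoc a (φ s) b)
  -- the bimodule structure on A ⊗_S A
  let lT : A → tensorSAA S A φ →+ tensorSAA S A φ := fun c =>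
    liftT φ (mk₂ (fun a b => mkT S A φ (c * a) b)
      (fun a a' b => by rw [mul_add, mkT_add_left])
      (fun a b b' => mkT_add_right φ (c * a) b b'))
      (fun s a b => by dsimp only [mk₂_apply]; rw [← mul_assoc, hrelT])
  let rT : A → tensorSAA S A φ →+ tensorSAA S A φ := fun d =>
    liftT φ (mk₂ (fun a b => mkT S A φ a (b * d))
      (fun a a' b => mkT_add_left φ a a' (b * d))
      (fun a b b' => by rw [add_mul, mkT_add_right]))
      (fun s a b => by dsimp only [mk₂_apply]; rw [hrelT, mul_assoc])
  -- the bimodule structure on Ω¹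
  let lO : A → omegaSA S A φ →+ omegaSA S A φ := fun c =>
    liftO φ (mk₂ (fun a b => mkO S A φ (c * a) b)
      (fun a a' b => by rw [mul_add, mkO_add_left])
      (fun a b b' => mkO_add_right φ (c * a) b b'))
      (fun a s => mkO_phi φ (c * a) s)
      (fun s a b => by dsimp only [mk₂_apply]; rw [← mul_assoc, hrelO])
  let rO : A → omegaSA S A φ →+ omegaSA S A φ := fun d =>
    liftO φ (mk₂ (fun a b => mkO S A φ a (b * d) - mkO S A φ (a * b) d)
      (fun a a' b => by rw [mkO_add_left, add_mul, mkO_add_left]; abel)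
      (fun a b b' => by rw [add_mul, mkO_add_right, mul_add, mkO_add_left]; abel)
      )
      (fun a s => by dsimp only [mk₂_apply]; rw [hrelO φ s a d, sub_self])
      (fun s a b => by dsimp only [mk₂_apply]; rw [hrelO φ s a (b * d), mul_assoc a (φ s) b, mul_assoc (φ s) b d])
  -- the map κ
  let κ : omegaSA S A φ →+ tensorSAA S A φ :=
    liftO φ (mk₂ (fun a b => mkT S A φ a b - σf (a * b))
      (fun a a' b => by rw [mkT_add_left, add_mul, hσadd]; abel)
      (fun a b b' => by rw [mkT_add_right, mul_add, hσadd]; abel))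
      (fun a s => by
        obtain ⟨j, hj1, hj2⟩ := happroxS s
        have h1 : (a * φ s) * φ (e j) = a * φ s := by
          rw [mul_assoc, ← map_mul, hj2]
        dsimp only [mk₂_apply]
        rw [hσ _ j h1, hrelT φ s a (φ (e j)), ← map_mul, hj2, sub_self])
      (fun s a b => by dsimp only [mk₂_apply]; rw [hrelT, mul_assoc])
  -- auxiliary projection and section
  let p : tensorSAA S A φ →+ omegaSA S A φ :=
    liftT φ (mk₂ (fun a b => mkO S A φ a b)
      (fun a a' b => mkO_add_left φ a a' b)
      (fun a b b' => mkO_add_right φ a b b'))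
      (fun s a b => hrelO φ s a b)
  let sh : A →+ tensorSAA S A φ := AddMonoidHom.mk' σf hσadd
  have hσl : ∀ c x : A, lT c (σf x) = σf (c * x) := by
    intro c x
    have hcx : (c * x) * φ (e (ι x)) = c * x := by rw [mul_assoc, (hι x).2]
    rw [hσ (c * x) (ι x) hcx]
    rfl
  have hσr : ∀ (d x : A), rT d (σf x) = mkT S A φ x d := by
    intro d x
    show mkT S A φ x (φ (e (ι x)) * d) = mkT S A φ x d
    rw [← hrelT φ (e (ι x)) x d, (hι x).2]
  have hσμ : ∀ x : A, μ (σf x) = x := fun x => (hι x).2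
  have hκ : ∀ a b : A, κ (mkO S A φ a b) = mkT S A φ a b - σf (a * b) := fun a b => rfl
  have hrOe : ∀ d a b : A,
      rO d (mkO S A φ a b) = mkO S A φ a (b * d) - mkO S A φ (a * b) d := fun d a b => rfl
  have hpκ : ∀ w, p (κ w) = w := by
    intro w
    refine DFunLike.congr_fun (O_ext φ (p.comp κ) (AddMonoidHom.id _) ?_) w
    intro a b
    show p (mkT S A φ a b - σf (a * b)) = mkO S A φ a b
    rw [map_sub]
    show mkO S A φ a b - mkO S A φ (a * b) (φ (e (ι (a * b)))) = mkO S A φ a b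
    rw [mkO_phi, sub_zero]
  have hμκ : ∀ w, μ (κ w) = 0 := by
    intro w
    refine DFunLike.congr_fun (O_ext φ (μ.comp κ) 0 ?_) w
    intro a b
    show μ (mkT S A φ a b - σf (a * b)) = 0
    rw [map_sub, hσμ]
    show a * b - a * b = 0
    rw [sub_self]
  have hid : ∀ t, κ (p t) + sh (μ t) = t := by
    intro t
    refine DFunLike.congr_fun (T_ext φ (κ.comp p + sh.comp μ) (AddMonoidHom.id _) ?_) t
    intro a b
    show κ (p (mkT S A φ a b)) + sh (μ (mkT S A φ a b)) = mkT S A φ a b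
    show (mkT S A φ a b - σf (a * b)) + σf (a * b) = mkT S A φ a b
    rw [sub_add_cancel]
  refine ⟨κ, μ, lT, rT, lO, rO, fun a b => rfl, ?_, fun c a b => rfl, fun d a b => rfl,
    fun c a b => rfl, fun d a b => rfl, ?_, ?_, ?_, ?_, ?_, ?_, ?_, ?_, ?_, ?_, ?_, ?_, ?_⟩
  · -- κ formula
    intro a b i hi
    rw [hκ, hσ (a * b) i hi.2]
  · -- lT action
    intro c c' x
    refine DFunLike.congr_fun (T_ext φ ((lT c).comp (lT c')) (lT (c * c')) ?_) x
    intro a b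
    show mkT S A φ (c * (c' * a)) b = mkT S A φ ((c * c') * a) b
    rw [mul_assoc]
  · -- rT action
    intro d d' x
    refine DFunLike.congr_fun (T_ext φ ((rT d').comp (rT d)) (rT (d * d')) ?_) x
    intro a b
    show mkT S A φ a ((b * d) * d') = mkT S A φ a (b * (d * d'))
    rw [mul_assoc]
  · -- lT rT commute
    intro c d x
    exact DFunLike.congr_fun
      (T_ext φ ((rT d).comp (lT c)) ((lT c).comp (rT d)) (fun a b => rfl)) x
  · -- lO action
    intro c c' x
    refine DFunLike.congr_fun (O_ext φ ((lO c).comp (lO c')) (lO (c * c')) ?_) x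
    intro a b
    show mkO S A φ (c * (c' * a)) b = mkO S A φ ((c * c') * a) b
    rw [mul_assoc]
  · -- rO action
    intro d d' x
    refine DFunLike.congr_fun (O_ext φ ((rO d').comp (rO d)) (rO (d * d')) ?_) x
    intro a b
    show rO d' (rO d (mkO S A φ a b)) = rO (d * d') (mkO S A φ a b)
    rw [hrOe d a b, map_sub, hrOe, hrOe, hrOe]
    simp only [mul_assoc]
    abel
  · -- lO rO commute
    intro c d x
    refine DFunLike.congr_fun (O_ext φ ((rO d).comp (lO c)) ((lO c).comp (rO d)) ?_) x
    intro a b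
    show rO d (mkO S A φ (c * a) b) = lO c (rO d (mkO S A φ a b))
    rw [hrOe, hrOe, map_sub]
    show mkO S A φ (c * a) (b * d) - mkO S A φ ((c * a) * b) d
      = mkO S A φ (c * a) (b * d) - mkO S A φ (c * (a * b)) d
    rw [mul_assoc]
  · -- κ lO
    intro c x
    refine DFunLike.congr_fun (O_ext φ (κ.comp (lO c)) ((lT c).comp κ) ?_) x
    intro a b
    show κ (mkO S A φ (c * a) b) = lT c (mkT S A φ a b - σf (a * b))
    rw [hκ, map_sub, hσl]
    show mkT S A φ (c * a) b - σf ((c * a) * b)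
      = mkT S A φ (c * a) b - σf (c * (a * b))
    rw [mul_assoc]
  · -- κ rO
    intro d x
    refine DFunLike.congr_fun (O_ext φ (κ.comp (rO d)) ((rT d).comp κ) ?_) x
    intro a b
    show κ (rO d (mkO S A φ a b)) = rT d (mkT S A φ a b - σf (a * b))
    rw [hrOe, map_sub, hκ, hκ, map_sub, hσr]
    show (mkT S A φ a (b * d) - σf (a * (b * d)))
        - (mkT S A φ (a * b) d - σf ((a * b) * d))
      = mkT S A φ a (b * d) - mkT S A φ (a * b) d
    rw [mul_assoc]
    abel
  · -- μ lT
    intro c x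
    refine DFunLike.congr_fun
      (T_ext φ (μ.comp (lT c)) ((AddMonoidHom.mulLeft c).comp μ) ?_) x
    intro a b
    show (c * a) * b = c * (a * b)
    rw [mul_assoc]
  · -- μ rT
    intro d x
    refine DFunLike.congr_fun
      (T_ext φ (μ.comp (rT d)) ((AddMonoidHom.mulRight d).comp μ) ?_) x
    intro a b
    show a * (b * d) = (a * b) * d
    rw [mul_assoc]
  · -- injectivity
    intro x y h
    have h2 := congrArg p h
    rwa [hpκ x, hpκ y] at h2
  · -- surjectivity
    intro a
    exact ⟨mkT S A φ a (φ (e (ι a))), (hι a).2⟩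
  · -- exactness
    intro t
    constructor
    · intro h
      refine ⟨p t, ?_⟩
      have h3 := hid t
      rwa [h, map_zero, add_zero] at h3
    · rintro ⟨w, rfl⟩
      exact hμκ w

end CuntzQuillen
end

section
/- Let S be a ring with approximate unit, A an S-algebra with approximate unit, and M a non-degenerate (A,A)-bimodule. The map d: A → Ω¹_S A sending a to e_i ⊗ [a] (for any e_i with e_i a = a = a e_i) is a universal S-derivation: composition with d gives a bijection Hom_{(A,A)}(Ω¹_S A, M) ≅ Der_S(A, M). -/
open TensorProduct

section CuntzQuillen

variable (S A : Type*) [NonUnitalRing S] [NonUnitalRing A] (φ : S →ₙ+* A)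

/-- Let `S` be a ring with approximate unit, `A` an `S`-algebra with
approximate unit, and `M` a non-degenerate `(A,A)`-bimodule (with left action `l` and
right action `r`).  The map `d : A → Ω¹_S A`, `a ↦ e_i ⊗ [a]` (for any `e_i` with
`e_i a = a = a e_i`) is a universal `S`-derivation: for every `S`-derivation
`D : A → M` there is a unique `(A,A)`-bimodule homomorphism `F : Ω¹_S A → M`
(with `Ω¹_S A` carrying the Leibniz bimodule structure) satisfying `F ∘ d = D`.
That is, composition with `d` is a bijection `Hom_{(A,A)}(Ω¹_S A, M) ≅ Der_S(A, M)`. -/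
theorem omega_universal_derivation
    (I : Type*) [Preorder I] [IsDirected I (· ≤ ·)] (e : I → S)
    (hidem : ∀ i, e i * e i = e i)
    (happroxS : ∀ s : S, ∃ i, e i * s = s ∧ s * e i = s)
    (hcompat : ∀ i j, i ≤ j → e j * e i = e i ∧ e i * e j = e i)
    (happroxA : ∀ a : A, ∃ i, φ (e i) * a = a ∧ a * φ (e i) = a)
    -- `M` is an `(A,A)`-bimodule:
    (M : Type*) [AddCommGroup M] (l : A → M → M) (r : M → A → M)
    (hladd : ∀ a m m', l a (m + m') = l a m + l a m')
    (hladd' : ∀ a a' m, l (a + a') m = l a m + l a' m)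
    (hradd : ∀ m m' a, r (m + m') a = r m a + r m' a)
    (hradd' : ∀ m a a', r m (a + a') = r m a + r m a')
    (hlmul : ∀ a b m, l (a * b) m = l a (l b m))
    (hrmul : ∀ m a b, r (r m a) b = r m (a * b))
    (hlr : ∀ a m b, r (l a m) b = l a (r m b))
    -- `M` is non-degenerate:
    (hnondeg : ∀ m : M, ∃ i, l (φ (e i)) m = m ∧ r m (φ (e i)) = m)
    -- `D` is an `S`-derivation:
    (D : A →+ M)
    (hD : ∀ a b : A, D (a * b) = r (D a) b + l a (D b))
    (hDS : ∀ s : S, D (φ s) = 0) :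
    ∃! F : omegaSA S A φ →+ M,
      -- `F` is a map of `(A,A)`-bimodules for the Leibniz structure on `Ω¹_S A`:
      (∀ c a b : A, F (mkO S A φ (c * a) b) = l c (F (mkO S A φ a b))) ∧
      (∀ d a b : A,
        F (mkO S A φ a (b * d)) - F (mkO S A φ (a * b) d)
          = r (F (mkO S A φ a b)) d) ∧
      -- `F ∘ d = D`, where `d a = e_i ⊗ [a]`:
      (∀ (a : A) (i : I), (φ (e i) * a = a ∧ a * φ (e i) = a) →
        F (mkO S A φ (φ (e i)) a) = D a) := by
  -- basic consequences of additivity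
  have r0 : ∀ b : A, r 0 b = 0 := fun b =>
    (AddMonoidHom.mk' (fun m => r m b) (fun x y => hradd x y b)).map_zero
  have l_zsmul_left : ∀ (c : ℤ) (a : A) (m : M), l (c • a) m = c • l a m := fun c a m =>
    map_zsmul (AddMonoidHom.mk' (fun x => l x m) (fun x y => hladd' x y m)) c a
  have l_zsmul_right : ∀ (c : ℤ) (a : A) (m : M), l a (c • m) = c • l a m := fun c a m =>
    map_zsmul (AddMonoidHom.mk' (l a) (hladd a)) c m
  -- D descends to A ⧸ imageOfS
  have hker₁ : imageOfS S A φ ≤ LinearMap.ker D.toIntLinearMap := by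
    rw [imageOfS, Submodule.span_le]
    rintro _ ⟨s, rfl⟩
    simpa [LinearMap.mem_ker] using hDS s
  set Dbar : (A ⧸ imageOfS S A φ) →ₗ[ℤ] M :=
    Submodule.liftQ _ D.toIntLinearMap hker₁ with hDbar
  have Dbar_mk : ∀ b : A, Dbar (Submodule.Quotient.mk b) = D b := fun b => rfl
  -- the bilinear map (a, q) ↦ l a (Dbar q)
  set bih : A →+ (A ⧸ imageOfS S A φ) →+ M :=
    AddMonoidHom.mk' (fun a => (AddMonoidHom.mk' (l a) (hladd a)).comp Dbar.toAddMonoidHom)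
      (fun a a' => by ext q; exact hladd' a a' (Dbar q)) with hbih
  have bih_apply : ∀ (a : A) (q : A ⧸ imageOfS S A φ), bih a q = l a (Dbar q) := fun a q => rfl
  set F₀ : A ⊗[ℤ] (A ⧸ imageOfS S A φ) →+ M :=
    TensorProduct.liftAddHom bih (by
      intro c a q
      rw [bih_apply, bih_apply, l_zsmul_left, map_smul, l_zsmul_right]) with hF₀
  have F₀_tmul : ∀ (a : A) (b : A),
      F₀ (a ⊗ₜ[ℤ] (Submodule.Quotient.mk b : A ⧸ imageOfS S A φ)) = l a (D b) := fun a b => by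
    rw [hF₀, TensorProduct.liftAddHom_tmul, bih_apply, Dbar_mk]
  have hker₂ : omegaRel S A φ ≤ LinearMap.ker F₀.toIntLinearMap := by
    rw [omegaRel, Submodule.span_le]
    rintro _ ⟨s, a, b, rfl⟩
    simp only [SetLike.mem_coe, LinearMap.mem_ker, map_sub, AddMonoidHom.coe_toIntLinearMap]
    rw [F₀_tmul, F₀_tmul, hlmul, hD, hDS, r0, zero_add, sub_self]
  set F : omegaSA S A φ →+ M :=
    (Submodule.liftQ _ F₀.toIntLinearMap hker₂).toAddMonoidHom with hFdef
  have hF : ∀ a b : A, F (mkO S A φ a b) = l a (D b) := fun a b => by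
    rw [hFdef, mkO]
    exact F₀_tmul a b
  refine ⟨F, ⟨?_, ?_, ?_⟩, ?_⟩
  · intro c a b
    rw [hF, hF, hlmul]
  · intro d a b
    rw [hF, hF, hF, hD, hladd, hlmul, hlr, add_sub_cancel_right]
  · rintro a i ⟨h1, h2⟩
    rw [hF]
    have h := hD (φ (e i)) a
    rw [h1, hDS, r0, zero_add] at h
    exact h.symm
  · rintro G ⟨hG1, hG2, hG3⟩
    -- a common approximate unit for two elements
    have approx2 : ∀ a b : A, ∃ j, φ (e j) * a = a ∧ a * φ (e j) = a ∧
        φ (e j) * b = b ∧ b * φ (e j) = b := by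
      intro a b
      obtain ⟨i, hi1, hi2⟩ := happroxA a
      obtain ⟨i', hb1, hb2⟩ := happroxA b
      obtain ⟨j, hji, hji'⟩ := directed_of (· ≤ ·) i i'
      obtain ⟨hc1, hc2⟩ := hcompat i j hji
      obtain ⟨hc1', hc2'⟩ := hcompat i' j hji'
      refine ⟨j, ?_, ?_, ?_, ?_⟩
      · calc φ (e j) * a = φ (e j) * (φ (e i) * a) := by rw [hi1]
          _ = φ (e j * e i) * a := by rw [map_mul, mul_assoc]
          _ = a := by rw [hc1, hi1]
      · calc a * φ (e j) = (a * φ (e i)) * φ (e j) := by rw [hi2]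
          _ = a * φ (e i * e j) := by rw [map_mul, mul_assoc]
          _ = a := by rw [hc2, hi2]
      · calc φ (e j) * b = φ (e j) * (φ (e i') * b) := by rw [hb1]
          _ = φ (e j * e i') * b := by rw [map_mul, mul_assoc]
          _ = b := by rw [hc1', hb1]
      · calc b * φ (e j) = (b * φ (e i')) * φ (e j) := by rw [hb2]
          _ = b * φ (e i' * e j) := by rw [map_mul, mul_assoc]
          _ = b := by rw [hc2', hb2]
    have keyG : ∀ a b : A, G (mkO S A φ a b) = l a (D b) := by
      intro a b
      obtain ⟨j, ha1, ha2, hb1, hb2⟩ := approx2 a b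
      have h : mkO S A φ a b = mkO S A φ (a * φ (e j)) b := by rw [ha2]
      rw [h, hG1, hG3 b j ⟨hb1, hb2⟩]
    ext x
    obtain ⟨y, rfl⟩ := Submodule.Quotient.mk_surjective _ x
    induction y using TensorProduct.induction_on with
    | zero => exact (map_zero G).trans (map_zero F).symm
    | tmul a q =>
      obtain ⟨b, rfl⟩ := Submodule.Quotient.mk_surjective _ q
      exact (keyG a b).trans (hF a b).symm
    | add x y hx hy =>
      have hG' := map_add G (Submodule.Quotient.mk x : omegaSA S A φ) (Submodule.Quotient.mk y)
      have hF' := map_add F (Submodule.Quotient.mk x : omegaSA S A φ) (Submodule.Quotient.mk y)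
      rw [Submodule.Quotient.mk_add]
      exact hG'.trans ((congrArg₂ (· + ·) hx hy).trans hF'.symm)

end CuntzQuillen
end
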